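/- Let N be an odd positive integer, c ∈ ℝ, and let b : ℤ → ℝ³ be a sequence of unit vectors such that b_{n+N} = −b_n for all n, ⟨b_n, b_{n+1}⟩ = c for all n, and Σ_{n=0}^{N−1} b_{n+1} × b_n = 0. Then the mirrored sequence b′_n := (−1)^n b_n consists of unit vectors and satisfies b′_{n+N} = b′_n for all n, ⟨b′_n, b′_{n+1}⟩ = −c for all n, and Σ_{n=0}^{N−1} b′_{n+1} × b′_n = 0. In other words, the mirror involution b_n ↦ (−1)^n b_n turns an anti-oriented N-Kaleidocycle with cos ν = c into an oriented N-Kaleidocycle with cos ν = −c when N is odd. -/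
import Mathlib

open Matrix

/-- Cross product on `Fin 3 → ℝ`. -/
def cross3 (u v : Fin 3 → ℝ) : Fin 3 → ℝ :=
  ![u 1 * v 2 - u 2 * v 1, u 2 * v 0 - u 0 * v 2, u 0 * v 1 - u 1 * v 0]

lemma cross3_smul (a a' : ℝ) (u v : Fin 3 → ℝ) :
    cross3 (a • u) (a' • v) = (a * a') • cross3 u v := by
  funext i
  fin_cases i <;> simp [cross3] <;> ring

lemma neg_one_zpow_sq (n : ℤ) : ((-1 : ℝ) ^ n) * ((-1 : ℝ) ^ n) = 1 := by
  rw [← mul_zpow]; norm_num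

/-- For odd `N`, the mirror involution `b_n ↦ (-1)^n b_n` turns an anti-oriented
`N`-Kaleidocycle with `cos ν = c` into an oriented `N`-Kaleidocycle with `cos ν = -c`. -/
theorem mirror_antioriented_to_oriented
    (N : ℕ) (hN : 0 < N) (hodd : Odd N) (c : ℝ) (b : ℤ → Fin 3 → ℝ)
    (hunit : ∀ n : ℤ, b n ⬝ᵥ b n = 1)
    (hanti : ∀ n : ℤ, b (n + N) = -b n)
    (hc : ∀ n : ℤ, b n ⬝ᵥ b (n + 1) = c)
    (hclose : ∑ n ∈ Finset.range N, cross3 (b ((n : ℤ) + 1)) (b (n : ℤ)) = 0)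
    (b' : ℤ → Fin 3 → ℝ) (hb' : ∀ n : ℤ, b' n = ((-1 : ℝ) ^ n) • b n) :
    (∀ n : ℤ, b' n ⬝ᵥ b' n = 1)
    ∧ (∀ n : ℤ, b' (n + N) = b' n)
    ∧ (∀ n : ℤ, b' n ⬝ᵥ b' (n + 1) = -c)
    ∧ ∑ n ∈ Finset.range N, cross3 (b' ((n : ℤ) + 1)) (b' (n : ℤ)) = 0 := by
  refine ⟨fun n => ?_, fun n => ?_, fun n => ?_, ?_⟩
  · rw [hb' n, smul_dotProduct, dotProduct_smul, hunit n, smul_eq_mul, smul_eq_mul,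
      mul_one, neg_one_zpow_sq]
  · rw [hb' (n + N), hb' n, hanti n]
    have hNodd : (-1 : ℝ) ^ (N : ℤ) = -1 := by
      rw [zpow_natCast, hodd.neg_one_pow]
    rw [zpow_add₀ (by norm_num : (-1:ℝ) ≠ 0), hNodd, smul_neg]
    simp [mul_comm]
  · rw [hb' n, hb' (n + 1), smul_dotProduct, dotProduct_smul, hc n, smul_eq_mul, smul_eq_mul,
      zpow_add₀ (by norm_num : (-1:ℝ) ≠ 0) n 1]
    rw [zpow_one]
    linear_combination (-c) * neg_one_zpow_sq n
  · have key : ∀ n : ℕ, cross3 (b' ((n : ℤ) + 1)) (b' (n : ℤ))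
        = (-1 : ℝ) • cross3 (b ((n : ℤ) + 1)) (b (n : ℤ)) := by
      intro n
      rw [hb', hb', cross3_smul, zpow_add₀ (by norm_num : (-1:ℝ) ≠ 0), zpow_one]
      have h : (-1:ℝ) ^ (n:ℤ) * -1 * (-1:ℝ) ^ (n:ℤ) = -1 := by
        linear_combination (-1 : ℝ) * neg_one_zpow_sq (n : ℤ)
      rw [h]
    rw [Finset.sum_congr rfl (fun n _ => key n), ← Finset.smul_sum, hclose, smul_zero]
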